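/- For G(u) = u + u^2 - 2u^3, H = G', and ρ < 1/6 with ρ* = (1-2ρ)/4: for all α ∈ [ρ, ρ*], G(α) - G(ρ) ≤ H(ρ*)·(α - ρ), and for all α ∈ [ρ*, 1], G(α) - G(ρ*) ≤ H(ρ*)·(α - ρ*). -/
import Mathlib


theorem stmt_8 (G H : ℝ → ℝ) (hG : ∀ u, G u = u + u^2 - 2*u^3)
    (hH : ∀ u, H u = 1 + 2*u - 6*u^2)
    (ρ : ℝ) (hρ0 : 0 ≤ ρ) (hρ : ρ < 1/6) :
    (∀ α ∈ Set.Icc ρ ((1 - 2*ρ)/4), G α - G ρ ≤ H ((1 - 2*ρ)/4) * (α - ρ)) ∧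
    (∀ α ∈ Set.Icc ((1 - 2*ρ)/4) (1:ℝ),
        G α - G ((1 - 2*ρ)/4) ≤ H ((1 - 2*ρ)/4) * (α - (1 - 2*ρ)/4)) := by
  constructor
  · intro α ⟨h1, h2⟩
    rw [hG, hG, hH]
    nlinarith [sq_nonneg (α - (1 - 2*ρ)/4), sub_nonneg.mpr h1,
      mul_nonneg (sub_nonneg.mpr h1) (sq_nonneg (α - (1 - 2*ρ)/4))]
  · intro α ⟨h1, h2⟩
    rw [hG, hG, hH]
    have hρα : ρ ≤ α := le_trans (by linarith) h1
    nlinarith [mul_nonneg (sub_nonneg.mpr hρα) (sq_nonneg (α - (1 - 2*ρ)/4))]
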